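/- Let G be a profinite group, p a prime, k a field of characteristic p, and H a closed normal subgroup of G such that p divides the supernatural order of H, i.e., there exists an open normal subgroup K of G with p dividing the (finite) index [H : H ∩ K]. Then no non-zero k[G/H]-module, regarded as a discrete G-module over k via the projection G → G/H, is a projective object of the category of discrete G-modules over k. -/

import Mathlib

open Function

/-- A module over the group algebra `k[G]` is a *discrete* `G`-module if every element is
fixed by some open normal subgroup of `G`. -/
def IsDiscreteGModK (G : Type) [Group G] [TopologicalSpace G] (k : Type) [Field k]
    (M : ModuleCat.{0} (MonoidAlgebra k G)) : Prop :=
  ∀ x : M, ∃ H : Subgroup G, H.Normal ∧ IsOpen (H : Set G) ∧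
    ∀ h ∈ H, (MonoidAlgebra.of k G h) • x = x

/-- `P` is a projective object of the category of discrete `G`-modules over `k`. -/
def IsProjectiveDiscreteGModK (G : Type) [Group G] [TopologicalSpace G] (k : Type) [Field k]
    (P : ModuleCat.{0} (MonoidAlgebra k G)) : Prop :=
  ∀ (M N : ModuleCat.{0} (MonoidAlgebra k G)),
    IsDiscreteGModK G k M → IsDiscreteGModK G k N →
    ∀ f : M →ₗ[MonoidAlgebra k G] N, Surjective f →
      ∀ g : P →ₗ[MonoidAlgebra k G] N,
        ∃ h : P →ₗ[MonoidAlgebra k G] M, f.comp h = g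

theorem key (G : Type) [Group G] [TopologicalSpace G] [IsTopologicalGroup G] [CompactSpace G]
    (p : ℕ) (hp : p.Prime) (k : Type) [Field k] [CharP k p]
    (H K : Subgroup G) (hKn : K.Normal) (hKo : IsOpen (K : Set G))
    (hpd : p ∣ (H ⊓ K).relIndex H)
    (M : Type) [AddCommGroup M] [Module (MonoidAlgebra k G) M]
    (htriv : ∀ h ∈ H, ∀ m : M, (MonoidAlgebra.of k G h) • m = m)
    (hdisc : IsDiscreteGModK G k (ModuleCat.of (MonoidAlgebra k G) M))
    (hnt : Nontrivial M) :
    ¬ IsProjectiveDiscreteGModK G k (ModuleCat.of (MonoidAlgebra k G) M) := by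
  classical
  intro hproj
  haveI := hKn
  haveI : Finite (G ⧸ K) := K.quotient_finite_of_isOpen hKo
  letI : Fintype (G ⧸ K) := Fintype.ofFinite _
  letI instkM : Module k M := Module.compHom M (algebraMap k (MonoidAlgebra k G))
  have hksmul : ∀ (c : k) (m : M), c • m = (MonoidAlgebra.single (1:G) c : MonoidAlgebra k G) • m :=
    fun _ _ => rfl
  have hmulsmul : ∀ (g g' : G) (m : M),
      MonoidAlgebra.of k G (g * g') • m
        = MonoidAlgebra.of k G g • (MonoidAlgebra.of k G g' • m) := by
    intro g g' m
    rw [map_mul, mul_smul]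
  have hcomm : ∀ (g : G) (c : k) (m : M),
      MonoidAlgebra.of k G g • (c • m) = c • (MonoidAlgebra.of k G g • m) := by
    intro g c m
    rw [hksmul, hksmul, ← mul_smul, ← mul_smul, MonoidAlgebra.of_apply,
      MonoidAlgebra.single_mul_single, MonoidAlgebra.single_mul_single, mul_one, one_mul,
      one_mul, mul_one]
  let ρM : Representation k G M :=
    { toFun := fun g =>
        { toFun := fun m => MonoidAlgebra.of k G g • m
          map_add' := fun a b => smul_add _ a b
          map_smul' := fun c m => (hcomm g c m).symm ▸ rfl }
      map_one' := by
        ext m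
        show MonoidAlgebra.of k G (1:G) • m = m
        rw [map_one, one_smul]
      map_mul' := by intro g g'; ext m; exact hmulsmul g g' m }
  have hρMtriv : ∀ h ∈ H, ∀ m : M, ρM h m = m := fun h hh m => htriv h hh m
  -- the coinduced-style representation on Fun(G/K, M)
  let ρN : Representation k G ((G ⧸ K) → M) :=
    { toFun := fun g =>
        { toFun := fun ψ x => ρM g (ψ (g⁻¹ • x))
          map_add' := fun ψ φ => by funext x; exact map_add (ρM g) _ _
          map_smul' := fun c ψ => by funext x; exact map_smul (ρM g) c _ }
      map_one' := by
        refine LinearMap.ext fun ψ => funext fun x => ?_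
        show ρM 1 (ψ ((1:G)⁻¹ • x)) = ψ x
        rw [map_one ρM, inv_one, one_smul]
        rfl
      map_mul' := by
        intro g g'
        refine LinearMap.ext fun ψ => funext fun x => ?_
        show ρM (g * g') (ψ ((g * g')⁻¹ • x)) = ρM g ((ρM g') (ψ (g'⁻¹ • g⁻¹ • x)))
        rw [map_mul ρM, mul_inv_rev, mul_smul]
        rfl }
  let N := ρN.asModule
  let e : N ≃+ ((G ⧸ K) → M) := ρN.asModuleEquiv
  have hNof : ∀ (g : G) (ψ : N) (x : G ⧸ K),
      e (MonoidAlgebra.of k G g • ψ) x = ρM g (e ψ (g⁻¹ • x)) := by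
    intro g ψ x
    rw [show e (MonoidAlgebra.of k G g • ψ) = ρN.asAlgebraHom (MonoidAlgebra.of k G g) (e ψ) from rfl,
      Representation.asAlgebraHom_of]
    rfl
  have hNsingle : ∀ (g : G) (c : k) (ψ : N) (x : G ⧸ K),
      e (MonoidAlgebra.single g c • ψ) x
        = MonoidAlgebra.single g c • (e ψ (g⁻¹ • x)) := by
    intro g c ψ x
    rw [show e (MonoidAlgebra.single g c • ψ) = ρN.asAlgebraHom (MonoidAlgebra.single g c) (e ψ) from rfl,
      Representation.asAlgebraHom_single]
    show c • (ρM g (e ψ (g⁻¹ • x))) = _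
    show c • (MonoidAlgebra.of k G g • (e ψ (g⁻¹ • x))) = _
    rw [hksmul, ← mul_smul, MonoidAlgebra.of_apply, MonoidAlgebra.single_mul_single,
      one_mul, mul_one]
  -- the sum map
  have hsum_single : ∀ (g : G) (c : k) (ψ : N),
      (∑ x : G ⧸ K, e (MonoidAlgebra.single g c • ψ) x)
        = MonoidAlgebra.single g c • ∑ x : G ⧸ K, e ψ x := by
    intro g c ψ
    rw [Finset.sum_congr rfl fun x _ => hNsingle g c ψ x, ← Finset.smul_sum]
    congr 1
    exact Equiv.sum_comp (MulAction.toPerm (g⁻¹ : G)) (e ψ)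
  have hsum_smul : ∀ (r : MonoidAlgebra k G) (ψ : N),
      (∑ x : G ⧸ K, e (r • ψ) x) = r • ∑ x : G ⧸ K, e ψ x := by
    intro r
    induction r using MonoidAlgebra.induction with
    | zero =>
      intro ψ
      rw [zero_smul, map_zero, zero_smul]
      simp
    | single_add g c rest hg hc ih =>
      intro ψ
      rw [add_smul, add_smul]
      simp only [map_add, Pi.add_apply, Finset.sum_add_distrib]
      rw [hsum_single g c ψ, ih ψ]
  let f : N →ₗ[MonoidAlgebra k G] M :=
    { toFun := fun ψ => ∑ x : G ⧸ K, e ψ x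
      map_add' := by
        intro ψ φ
        rw [← Finset.sum_add_distrib]
        exact Finset.sum_congr rfl fun x _ => by rw [map_add e]; rfl
      map_smul' := fun r ψ => hsum_smul r ψ }
  have hfsurj : Surjective f := by
    intro m
    refine ⟨e.symm (Pi.single ((1 : G) : G ⧸ K) m), ?_⟩
    show (∑ x : G ⧸ K, e (e.symm (Pi.single ((1:G) : G ⧸ K) m)) x) = m
    rw [e.apply_symm_apply]
    rw [Finset.sum_pi_single']
    simp
  -- discreteness of N
  have hdiscN : IsDiscreteGModK G k (ModuleCat.of (MonoidAlgebra k G) N) := by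
    intro ψ
    choose L hLn hLo hLfix using fun x : G ⧸ K => hdisc (e ψ x)
    have hLN : (⨅ x : G ⧸ K, L x).Normal := by
      constructor
      intro n hn g
      rw [Subgroup.mem_iInf] at *
      intro x
      exact (hLn x).conj_mem n (hn x) g
    refine ⟨K ⊓ ⨅ x : G ⧸ K, L x, ?_, ?_, ?_⟩
    · constructor
      intro n hn g
      rcases Subgroup.mem_inf.mp hn with ⟨h1, h2⟩
      exact Subgroup.mem_inf.mpr ⟨hKn.conj_mem n h1 g, hLN.conj_mem n h2 g⟩
    · have hco : ((K ⊓ ⨅ x : G ⧸ K, L x : Subgroup G) : Set G)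
          = (K : Set G) ∩ ⋂ x : G ⧸ K, (L x : Set G) := by
        simp [Subgroup.coe_iInf]
      rw [hco]
      exact hKo.inter (isOpen_iInter_of_finite fun x => hLo x)
    · intro h hh
      rcases Subgroup.mem_inf.mp hh with ⟨hhK, hhL⟩
      apply e.injective
      funext x
      rw [hNof]
      have hx : (h⁻¹ : G) • x = x := by
        obtain ⟨g, rfl⟩ := QuotientGroup.mk_surjective x
        rw [MulAction.Quotient.smul_mk]
        refine (QuotientGroup.eq).mpr ?_
        have := hKn.conj_mem h hhK g⁻¹
        simpa [mul_assoc, mul_inv_rev, smul_eq_mul] using this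
      rw [hx]
      exact hLfix x h (Subgroup.mem_iInf.mp hhL x)
  -- apply projectivity
  obtain ⟨s, hs⟩ := hproj (ModuleCat.of (MonoidAlgebra k G) N)
      (ModuleCat.of (MonoidAlgebra k G) M) hdiscN hdisc f hfsurj LinearMap.id
  obtain ⟨m, hm⟩ := exists_ne (0 : M)
  set ψ : N := s m with hψ
  have hfsm : f ψ = m := by
    have := LinearMap.ext_iff.mp hs m
    simpa using this
  have hinv : ∀ h ∈ H, ∀ x : G ⧸ K, e ψ (h⁻¹ • x) = e ψ x := by
    intro h hh x
    have h1 : (MonoidAlgebra.of k G h) • ψ = ψ := by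
      rw [hψ, ← map_smul s, htriv h hh]
    have h2 := congrFun (congrArg (⇑e) h1) x
    rw [hNof] at h2
    rw [← h2]
    exact (hρMtriv h hh _).symm
  have hconst : ∀ h ∈ H, ∀ x : G ⧸ K, e ψ (h • x) = e ψ x := by
    intro h hh x
    have := hinv h⁻¹ (inv_mem hh) x
    rwa [inv_inv] at this
  -- stabilizers
  have hstab : ∀ x₀ : G ⧸ K, MulAction.stabilizer (↥H) x₀ = (H ⊓ K).subgroupOf H := by
    intro x₀
    ext h
    rw [MulAction.mem_stabilizer_iff, inf_comm, Subgroup.inf_subgroupOf_right,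
      Subgroup.mem_subgroupOf]
    obtain ⟨g, rfl⟩ := QuotientGroup.mk_surjective x₀
    rw [show h • (g : G ⧸ K) = (((h : G) • g : G) : G ⧸ K) from rfl, QuotientGroup.eq, smul_eq_mul,
      mul_inv_rev]
    constructor
    · intro ha
      have h2 : (h : G)⁻¹ ∈ K := by
        have := hKn.conj_mem _ ha g
        simpa [mul_assoc] using this
      exact inv_mem_iff.mp h2
    · intro ha
      have := hKn.conj_mem _ (inv_mem ha) g⁻¹
      simpa [mul_assoc] using this
  letI : Fintype (Quotient (MulAction.orbitRel (↥H) (G ⧸ K))) := Fintype.ofFinite _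
  have hcard : ∀ y : Quotient (MulAction.orbitRel (↥H) (G ⧸ K)),
      p ∣ Fintype.card {x : G ⧸ K // Quotient.mk (MulAction.orbitRel (↥H) (G ⧸ K)) x = y} := by
    intro y
    have e1 : {x : G ⧸ K // Quotient.mk (MulAction.orbitRel (↥H) (G ⧸ K)) x = y}
        ≃ {x : G ⧸ K // x ∈ MulAction.orbit (↥H) y.out} :=
      Equiv.subtypeEquivRight fun x => by
        constructor
        · intro hx
          have hx' : Quotient.mk (MulAction.orbitRel (↥H) (G ⧸ K)) x
              = Quotient.mk (MulAction.orbitRel (↥H) (G ⧸ K)) y.out := by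
            rw [hx, Quotient.out_eq]
          exact MulAction.orbitRel_apply.mp (Quotient.exact hx')
        · intro hx
          exact (Quotient.sound (MulAction.orbitRel_apply.mpr hx)).trans (Quotient.out_eq y)
    have e2 : MulAction.orbit (↥H) y.out ≃ (↥H) ⧸ MulAction.stabilizer (↥H) y.out :=
      MulAction.orbitEquivQuotientStabilizer (↥H) y.out
    have hc : Fintype.card {x : G ⧸ K // Quotient.mk (MulAction.orbitRel (↥H) (G ⧸ K)) x = y}
        = Nat.card ((↥H) ⧸ MulAction.stabilizer (↥H) y.out) := by
      rw [← Nat.card_eq_fintype_card]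
      exact Nat.card_congr (e1.trans e2)
    rw [hc, hstab y.out, ← Subgroup.index_eq_card]
    exact hpd
  have hzero : (∑ x : G ⧸ K, e ψ x) = 0 := by
    rw [← Fintype.sum_fiberwise (Quotient.mk (MulAction.orbitRel (↥H) (G ⧸ K)))
      (fun x => e ψ x)]
    refine Finset.sum_eq_zero fun y _ => ?_
    have hval : ∀ x : {x : G ⧸ K // Quotient.mk (MulAction.orbitRel (↥H) (G ⧸ K)) x = y},
        e ψ (x : G ⧸ K) = e ψ y.out := by
      rintro ⟨x, hx⟩
      have hx' : Quotient.mk (MulAction.orbitRel (↥H) (G ⧸ K)) x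
          = Quotient.mk (MulAction.orbitRel (↥H) (G ⧸ K)) y.out := by
        rw [hx, Quotient.out_eq]
      obtain ⟨h, hh⟩ := MulAction.orbitRel_apply.mp (Quotient.exact hx')
      show e ψ x = e ψ y.out
      rw [← hh]
      show e ψ ((h : G) • y.out) = e ψ y.out
      exact hconst (h : G) h.2 y.out
    calc (∑ x : {x : G ⧸ K // Quotient.mk (MulAction.orbitRel (↥H) (G ⧸ K)) x = y},
            e ψ (x : G ⧸ K))
        = ∑ _x : {x : G ⧸ K // Quotient.mk (MulAction.orbitRel (↥H) (G ⧸ K)) x = y},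
            e ψ y.out := Finset.sum_congr rfl fun x _ => hval x
      _ = (Fintype.card {x : G ⧸ K // Quotient.mk (MulAction.orbitRel (↥H) (G ⧸ K)) x = y})
            • e ψ y.out := by rw [Finset.sum_const, Finset.card_univ]
      _ = ((Fintype.card {x : G ⧸ K // Quotient.mk (MulAction.orbitRel (↥H) (G ⧸ K)) x = y} : k))
            • e ψ y.out := (Nat.cast_smul_eq_nsmul k _ _).symm
      _ = 0 := by rw [(CharP.cast_eq_zero_iff k p _).mpr (hcard y), zero_smul]
  have hmzero : m = 0 := by
    rw [← hfsm]
    exact hzero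
  exact hm hmzero



/-- **(Chirvasitu–Kanda, Lemma 3.6.)** Let `G` be a profinite group, `p` a prime, `k` a field
of characteristic `p`, and `H` a closed normal subgroup of `G` such that `p` divides the
supernatural order of `H`, i.e. there is an open normal subgroup `K` of `G` with
`p ∣ [H : H ∩ K]`. Then no non-zero `k[G/H]`-module, regarded as a discrete `G`-module over
`k` via the projection `G → G/H`, is a projective object of the category of discrete
`G`-modules over `k`. -/
theorem stmt_4 (G : Type) [Group G] [TopologicalSpace G] [IsTopologicalGroup G]
    [CompactSpace G] [T2Space G] [TotallyDisconnectedSpace G]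
    (p : ℕ) (hp : p.Prime) (k : Type) [Field k] [CharP k p]
    (H : Subgroup G) [H.Normal] (hHclosed : IsClosed (H : Set G))
    (hdvd : ∃ K : Subgroup G, K.Normal ∧ IsOpen (K : Set G) ∧ p ∣ (H ⊓ K).relIndex H)
    (M : Type) [AddCommGroup M] [Module (MonoidAlgebra k (G ⧸ H)) M] :
    letI : Module (MonoidAlgebra k G) M :=
      Module.compHom M (MonoidAlgebra.mapDomainRingHom k (QuotientGroup.mk' H))
    IsDiscreteGModK G k (ModuleCat.of (MonoidAlgebra k G) M) → Nontrivial M →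
      ¬ IsProjectiveDiscreteGModK G k (ModuleCat.of (MonoidAlgebra k G) M) := by
  letI : Module (MonoidAlgebra k G) M :=
    Module.compHom M (MonoidAlgebra.mapDomainRingHom k (QuotientGroup.mk' H))
  intro hdisc hnt
  obtain ⟨K, hKn, hKo, hpdvd⟩ := hdvd
  refine key G p hp k H K hKn hKo hpdvd M ?_ hdisc hnt
  intro h hh m
  show (MonoidAlgebra.mapDomainRingHom k (QuotientGroup.mk' H)) (MonoidAlgebra.of k G h) • m = m
  have h1 : (MonoidAlgebra.mapDomainRingHom k (QuotientGroup.mk' H)) (MonoidAlgebra.of k G h)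
      = 1 := by
    rw [MonoidAlgebra.of_apply]
    show MonoidAlgebra.mapDomain (QuotientGroup.mk' H) (MonoidAlgebra.single h 1)
      = (1 : MonoidAlgebra k (G ⧸ H))
    rw [MonoidAlgebra.mapDomain_single]
    have h2 : QuotientGroup.mk' H h = 1 := (QuotientGroup.eq_one_iff h).mpr hh
    rw [h2]
    exact MonoidAlgebra.one_def.symm
  rw [h1, one_smul]
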